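/- The lower Dini derivative D^- f(x) is superlinear (superadditive and positively homogeneous) if and only if D^- f(x)(u) = D^-_M f(x)(u) for all u ∈ E. -/

import Mathlib

open Filter Topology

variable {E : Type*} [NormedAddCommGroup E] [NormedSpace ℝ E]

/-- Difference quotient of `f` at `x` in direction `u`. -/
noncomputable def diniQuot (f : E → ℝ) (x u : E) : ℝ → ℝ :=
  fun t => (f (x + t • u) - f x) / t

/-- Lower Dini derivative `D⁻ f(x)(u)`. -/
noncomputable def lowerDini (f : E → ℝ) (x u : E) : ℝ :=
  liminf (diniQuot f x u) (𝓝[>] 0)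

/-- Upper Dini derivative `D⁺ f(x)(u)`. -/
noncomputable def upperDini (f : E → ℝ) (x u : E) : ℝ :=
  limsup (diniQuot f x u) (𝓝[>] 0)

/-- Modified lower Dini derivative `D⁻_M f(x)(u)`. -/
noncomputable def lowerDiniM (f : E → ℝ) (x u : E) : ℝ :=
  ⨅ w : E, (lowerDini f x (u + w) - lowerDini f x w)

/-- Modified upper Dini derivative `D⁺_M f(x)(u)`. -/
noncomputable def upperDiniM (f : E → ℝ) (x u : E) : ℝ :=
  ⨆ w : E, (upperDini f x (u + w) - upperDini f x w)

/-- The difference quotients of `f` at `x` in direction `u` are bounded near `0⁺`,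
so that the lower/upper Dini derivatives are genuine (finite) values. -/
def DiniFinite (f : E → ℝ) (x u : E) : Prop :=
  IsBoundedUnder (· ≤ ·) (𝓝[>] (0:ℝ)) (diniQuot f x u) ∧
  IsBoundedUnder (· ≥ ·) (𝓝[>] (0:ℝ)) (diniQuot f x u)

/-- Finiteness of the modified lower Dini derivative. -/
def LowerDiniMFinite (f : E → ℝ) (x u : E) : Prop :=
  BddBelow (Set.range fun w : E => lowerDini f x (u + w) - lowerDini f x w)

/-- Finiteness of the modified upper Dini derivative. -/
def UpperDiniMFinite (f : E → ℝ) (x u : E) : Prop :=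
  BddAbove (Set.range fun w : E => upperDini f x (u + w) - upperDini f x w)

lemma lowerDini_zero' (f : E → ℝ) (x : E) : lowerDini f x 0 = 0 := by
  have : diniQuot f x 0 = fun _ : ℝ => (0:ℝ) := by
    funext t; simp [diniQuot]
  rw [lowerDini, this, liminf_const]

lemma map_mul_left_nhdsWithin_pos {c : ℝ} (hc : 0 < c) :
    Filter.map (fun t : ℝ => c * t) (𝓝[>] (0:ℝ)) = 𝓝[>] (0:ℝ) := by
  have h := (Homeomorph.mulLeft₀ c hc.ne').isEmbedding.map_nhdsWithin_eq
    (Set.Ioi (0:ℝ)) 0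
  have himg : (fun t : ℝ => c * t) '' Set.Ioi (0:ℝ) = Set.Ioi (0:ℝ) := by
    have := (OrderIso.mulLeft₀ c hc).image_Ioi 0
    rw [show (fun t : ℝ => c * t) = ⇑(OrderIso.mulLeft₀ c hc) from rfl, this]
    simp
  simp only [Homeomorph.coe_mulLeft₀] at h
  simpa [himg] using h

lemma diniQuot_smul (f : E → ℝ) (x u : E) {c : ℝ} (hc : 0 < c) :
    diniQuot f x (c • u) = fun t => c * diniQuot f x u (c * t) := by
  funext t
  by_cases ht : t = 0
  · simp [diniQuot, ht]
  · simp only [diniQuot, smul_smul, mul_comm t c]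
    field_simp

lemma liminf_map_comp {α β : Type*} [ConditionallyCompleteLattice β] (u : α → β)
    (m : α → α) (l : Filter α) :
    liminf u (Filter.map m l) = liminf (u ∘ m) l := by
  simp only [Filter.liminf, Filter.map_map]

lemma lowerDini_smul (f : E → ℝ) (x u : E) (hfin : DiniFinite f x u)
    {c : ℝ} (hc : 0 < c) : lowerDini f x (c • u) = c * lowerDini f x u := by
  haveI : (𝓝[>] (0:ℝ)).NeBot := nhdsGT_neBot 0
  rw [lowerDini, diniQuot_smul f x u hc]
  have h1 : liminf (fun s => c * diniQuot f x u s) (𝓝[>] (0:ℝ)) =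
      liminf (fun t => c * diniQuot f x u (c * t)) (𝓝[>] (0:ℝ)) := by
    conv_lhs => rw [← map_mul_left_nhdsWithin_pos hc]
    rw [liminf_map_comp]
    rfl
  rw [← h1]
  have e := OrderIso.mulLeft₀ c hc
  have hgu : IsBoundedUnder (· ≥ ·) (𝓝[>] (0:ℝ))
      (fun t => (OrderIso.mulLeft₀ c hc) (diniQuot f x u t)) :=
    ((OrderIso.mulLeft₀ c hc).isBoundedUnder_ge_comp).mpr hfin.2
  have hgu_co : IsCoboundedUnder (· ≥ ·) (𝓝[>] (0:ℝ))
      (fun t => (OrderIso.mulLeft₀ c hc) (diniQuot f x u t)) :=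
    (((OrderIso.mulLeft₀ c hc).isBoundedUnder_le_comp).mpr hfin.1).isCoboundedUnder_ge
  have := (OrderIso.mulLeft₀ c hc).liminf_apply (f := 𝓝[>] (0:ℝ))
    (u := diniQuot f x u) hfin.2 (hfin.1.isCoboundedUnder_ge) hgu hgu_co
  simpa [OrderIso.mulLeft₀, Equiv.mulLeft₀, lowerDini] using this.symm

/-- `D⁻ f(x)` is superlinear iff it coincides with `D⁻_M f(x)`. -/
theorem lowerDini_superlinear_iff_eq_lowerDiniM (f : E → ℝ) (x : E)
    (hfin : ∀ u : E, DiniFinite f x u)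
    (hMfin : ∀ u : E, LowerDiniMFinite f x u) :
    ((∀ (c : ℝ), 0 ≤ c → ∀ u : E, lowerDini f x (c • u) = c * lowerDini f x u) ∧
      (∀ u v : E, lowerDini f x u + lowerDini f x v ≤ lowerDini f x (u + v))) ↔
    (∀ u : E, lowerDini f x u = lowerDiniM f x u) := by
  constructor
  · rintro ⟨_, hadd⟩ u
    rw [lowerDiniM]
    refine le_antisymm (le_ciInf fun w => ?_) ?_
    · have := hadd u w
      linarith
    · have h0 : lowerDini f x 0 = 0 := lowerDini_zero' f x
      have := ciInf_le (hMfin u) (0 : E)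
      simpa [h0] using this
  · intro heq
    have hadd : ∀ u v : E, lowerDini f x u + lowerDini f x v ≤ lowerDini f x (u + v) := by
      intro u v
      have h : lowerDini f x u ≤ lowerDini f x (u + v) - lowerDini f x v := by
        rw [heq u, lowerDiniM]
        exact ciInf_le (hMfin u) v
      linarith
    refine ⟨fun c hc u => ?_, hadd⟩
    rcases hc.eq_or_lt with rfl | hc'
    · simp [lowerDini_zero' f x]
    · exact lowerDini_smul f x u (hfin u) hc'
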